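/- Fix d ≥ 1 and m ∈ ℕ. A vector field v : Fin d → MvPolynomial (Fin d) ℝ belongs to S_m (i.e., each component has total degree at most m and pderiv i (v j) = pderiv j (v i) for all i, j) if and only if there exists a polynomial f in d variables over ℝ of total degree at most m+1 with pderiv i f = v i for every i. In other words, S_m is exactly the image of the space of polynomials of total degree at most m+1 under the formal gradient. -/

import Mathlib

open MvPolynomial Finsupp

variable {d : ℕ}

/-- Coefficient formula for the formal partial derivative. -/
theorem coeff_pderiv' (i : Fin d) (p : MvPolynomial (Fin d) ℝ) (β : Fin d →₀ ℕ) :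
    coeff β (pderiv i p) = ((β i + 1 : ℕ) : ℝ) * coeff (β + Finsupp.single i 1) p := by
  induction p using MvPolynomial.induction_on' with
  | monomial α c =>
    rw [pderiv_monomial]
    by_cases h : α = β + Finsupp.single i 1
    · subst h
      rw [coeff_monomial, coeff_monomial, if_pos rfl, if_pos (by
        ext a
        simp [Finsupp.tsub_apply, Finsupp.single_apply]
        )]
      simp [Finsupp.single_apply]
      ring
    · rw [coeff_monomial, coeff_monomial, if_neg h]
      by_cases h2 : α i = 0
      · simp [h2]
      · rw [if_neg, mul_zero]
        intro hb
        apply h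
        rw [← hb]
        ext a
        simp only [Finsupp.add_apply, Finsupp.tsub_apply, Finsupp.single_apply]
        by_cases ha : i = a
        · subst ha; simp; omega
        · simp [ha]
  | add p q hp hq => simp [hp, hq, mul_add]

/-- Scale each monomial `X^α` by `w (|α|)`. -/
noncomputable def scaleDeg (w : ℕ → ℝ) (p : MvPolynomial (Fin d) ℝ) : MvPolynomial (Fin d) ℝ :=
  ∑ α ∈ p.support, monomial α (w (α.sum fun _ n => n) * coeff α p)

theorem coeff_scaleDeg (w : ℕ → ℝ) (p : MvPolynomial (Fin d) ℝ) (β : Fin d →₀ ℕ) :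
    coeff β (scaleDeg w p) = w (β.sum fun _ n => n) * coeff β p := by
  rw [scaleDeg, coeff_sum]
  simp only [coeff_monomial]
  rw [Finset.sum_ite_eq' p.support β]
  by_cases h : β ∈ p.support
  · rw [if_pos h]
  · rw [if_neg h, MvPolynomial.notMem_support_iff.mp h, mul_zero]

theorem euler_identity (p : MvPolynomial (Fin d) ℝ) :
    ∑ i : Fin d, X i * pderiv i p = scaleDeg (fun n => (n : ℝ)) p := by
  apply MvPolynomial.ext
  intro β
  rw [coeff_scaleDeg, coeff_sum]
  have : ∀ i : Fin d, coeff β (X i * pderiv i p) = ((β i : ℕ) : ℝ) * coeff β p := by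
    intro i
    rw [coeff_X_mul']
    by_cases h : i ∈ β.support
    · rw [if_pos h, coeff_pderiv']
      have h1 : β - Finsupp.single i 1 + Finsupp.single i 1 = β := by
        ext a
        simp only [Finsupp.add_apply, Finsupp.tsub_apply, Finsupp.single_apply]
        have := Finsupp.mem_support_iff.mp h
        by_cases ha : i = a
        · subst ha; simp; omega
        · simp [ha]
      have h2 : ((β - Finsupp.single i 1 : Fin d →₀ ℕ)) i + 1 = β i := by
        have := Finsupp.mem_support_iff.mp h
        simp only [Finsupp.tsub_apply, Finsupp.single_apply, eq_self_iff_true, if_true]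
        omega
      rw [h1, h2]
    · rw [if_neg h]
      have := Finsupp.notMem_support_iff.mp h
      rw [this]
      simp
  rw [Finset.sum_congr rfl fun i _ => this i, ← Finset.sum_mul]
  congr 1
  rw [Finsupp.sum_fintype β (fun _ n => n) (fun _ => rfl)]
  push_cast
  rfl

theorem deg_add_single (β : Fin d →₀ ℕ) (j : Fin d) :
    ((β + Finsupp.single j 1).sum fun _ n => n) = (β.sum fun _ n => n) + 1 := by
  rw [Finsupp.sum_add_index' (fun _ => rfl) (fun _ _ _ => rfl),
    Finsupp.sum_single_index rfl]

/-- The irrotational polynomial space `S_m` is exactly the image of the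
polynomials of total degree at most `m + 1` under the formal gradient:
`v ∈ S_m` (each component of total degree ≤ m, symmetric formal Jacobian)
iff `v` is the formal gradient of a polynomial of total degree ≤ m + 1. -/
theorem mem_Sm_iff_exists_potential (d m : ℕ) (hd : 1 ≤ d)
    (v : Fin d → MvPolynomial (Fin d) ℝ) :
    ((∀ i : Fin d, (v i).totalDegree ≤ m) ∧
      ∀ i j : Fin d, pderiv i (v j) = pderiv j (v i)) ↔
    ∃ f : MvPolynomial (Fin d) ℝ, f.totalDegree ≤ m + 1 ∧
      ∀ i : Fin d, pderiv i f = v i := by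
  constructor
  · rintro ⟨hdeg, hsym⟩
    set g : MvPolynomial (Fin d) ℝ := ∑ i : Fin d, X i * v i with hgdef
    have hpg : ∀ j : Fin d, pderiv j g = v j + scaleDeg (fun n => (n : ℝ)) (v j) := by
      intro j
      rw [hgdef, map_sum]
      have hterm : ∀ i : Fin d, (pderiv j) (X i * v i)
          = pderiv j (X i) * v i + X i * pderiv j (v i) := fun i => pderiv_mul
      rw [Finset.sum_congr rfl fun i _ => hterm i, Finset.sum_add_distrib]
      congr 1
      · rw [Finset.sum_eq_single j]
        · rw [pderiv_X_self, one_mul]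
        · intro i _ hij
          rw [pderiv_X_of_ne hij, zero_mul]
        · intro h; exact absurd (Finset.mem_univ j) h
      · rw [← euler_identity]
        refine Finset.sum_congr rfl fun i _ => ?_
        rw [hsym i j]
    refine ⟨scaleDeg (fun n => (n : ℝ)⁻¹) g, ?_, ?_⟩
    · have hsub : (scaleDeg (fun n => (n : ℝ)⁻¹) g).support ⊆ g.support := by
        intro β hb
        rw [MvPolynomial.mem_support_iff] at *
        rw [coeff_scaleDeg] at hb
        exact fun h0 => hb (by rw [h0, mul_zero])
      refine (totalDegree_le_of_support_subset hsub).trans ?_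
      refine (totalDegree_finset_sum _ _).trans ?_
      refine Finset.sup_le fun i _ => ?_
      calc (X i * v i).totalDegree ≤ (X i : MvPolynomial (Fin d) ℝ).totalDegree
            + (v i).totalDegree := totalDegree_mul _ _
        _ ≤ 1 + m := add_le_add (le_of_eq (totalDegree_X i)) (hdeg i)
        _ = m + 1 := add_comm _ _
    · intro j
      apply MvPolynomial.ext; intro β
      have key := congrArg (MvPolynomial.coeff β) (hpg j)
      rw [coeff_pderiv', coeff_add, coeff_scaleDeg] at key
      rw [coeff_pderiv', coeff_scaleDeg, deg_add_single]
      have h1 : ((β j + 1 : ℕ) : ℝ) ≠ 0 := by positivity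
      have h2 : (((β.sum fun _ n => n) + 1 : ℕ) : ℝ) ≠ 0 := by positivity
      push_cast at key h2 ⊢
      field_simp
      linear_combination key
  · rintro ⟨f, hf, hgrad⟩
    constructor
    · intro i
      rw [← hgrad i, MvPolynomial.totalDegree]
      refine Finset.sup_le fun β hb => ?_
      have hc : MvPolynomial.coeff (β + Finsupp.single i 1) f ≠ 0 := by
        intro h0
        have hm := MvPolynomial.mem_support_iff.mp hb
        rw [coeff_pderiv', h0, mul_zero] at hm
        exact hm rfl
      have hle := le_totalDegree (MvPolynomial.mem_support_iff.mpr hc)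
      rw [deg_add_single] at hle
      omega
    · intro i j
      rw [← hgrad i, ← hgrad j]
      apply MvPolynomial.ext; intro β
      rw [coeff_pderiv', coeff_pderiv', coeff_pderiv', coeff_pderiv',
        add_right_comm β (Finsupp.single j 1) (Finsupp.single i 1)]
      by_cases h : i = j
      · subst h; rfl
      · simp only [Finsupp.add_apply, Finsupp.single_apply, if_neg h, if_neg (Ne.symm h),
          add_zero]
        push_cast
        ring
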